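/- For the clutter C_k(Γ_n) of the n-cycle (edges are sets of k cyclically consecutive vertices, 2 ≤ k ≤ n), the edgewise domination number ε satisfies ε(C_k(Γ_n)) = ⌈n/(3k−2)⌉. -/
import Mathlib


/-- A vertex is isolated in a clutter if it lies in no edge. -/
def IsIsolated {V : Type} (Ed : Finset V → Prop) (v : V) : Prop := ∀ e, Ed e → v ∉ e

/-- A set `F` of edges of the clutter with edge predicate `Ed` is edgewise dominant if every
non-isolated vertex that lies in no edge of `F` and in no trivial edge has a neighbor
contained in some edge of `F`. -/
def EdgewiseDominant {V : Type} (Ed : Finset V → Prop) (F : Finset (Finset V)) : Prop :=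
  (∀ f ∈ F, Ed f) ∧
    ∀ v : V, ¬ IsIsolated Ed v → (∀ f ∈ F, v ∉ f) → (∀ e, Ed e → v ∈ e → e.card ≠ 1) →
      ∃ w : V, (∃ e, Ed e ∧ v ∈ e ∧ w ∈ e) ∧ ∃ f ∈ F, w ∈ f

/-- `ε(C)`: the minimum cardinality of an edgewise dominant set of edges. -/
noncomputable def epsilonDom {V : Type} (Ed : Finset V → Prop) : ℕ :=
  sInf {m : ℕ | ∃ F : Finset (Finset V), EdgewiseDominant Ed F ∧ F.card = m}

/-- The edges of the clutter `C_k(Γ_n)` of the `n`-cycle: sets of `k` cyclically consecutive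
vertices. -/
def CycleEdge (n k : ℕ) (A : Finset (ZMod n)) : Prop :=
  ∃ a : ZMod n, A = (Finset.range k).image (fun j : ℕ => a + (j : ZMod n))

namespace CycleHelper

/-- The arc of `m` cyclically consecutive vertices starting at `a`. -/
def arc (n m : ℕ) (a : ZMod n) : Finset (ZMod n) :=
  (Finset.range m).image (fun j : ℕ => a + (j : ZMod n))

lemma mem_arc {n m : ℕ} {a v : ZMod n} : v ∈ arc n m a ↔ ∃ j, j < m ∧ v = a + (j : ℕ) := by
  simp only [arc, Finset.mem_image, Finset.mem_range]
  exact ⟨fun ⟨j, hj, h⟩ => ⟨j, hj, h.symm⟩, fun ⟨j, hj, h⟩ => ⟨j, hj, h.symm⟩⟩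

lemma cycleEdge_arc {n k : ℕ} (a : ZMod n) : CycleEdge n k (arc n k a) := ⟨a, rfl⟩

lemma card_arc {n k : ℕ} [NeZero n] (hn : k ≤ n) (a : ZMod n) : (arc n k a).card = k := by
  rw [arc, Finset.card_image_of_injOn, Finset.card_range]
  intro i hi j hj hij
  simp only [Finset.mem_coe, Finset.mem_range] at hi hj
  have h1 : (i : ZMod n) = (j : ZMod n) := by
    have := add_left_cancel hij
    exact this
  have h2 : (i : ZMod n).val = (j : ZMod n).val := by rw [h1]
  rwa [ZMod.val_cast_of_lt (by omega), ZMod.val_cast_of_lt (by omega)] at h2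

lemma self_mem_arc {n k : ℕ} (hk : 1 ≤ k) (a : ZMod n) : a ∈ arc n k a :=
  mem_arc.2 ⟨0, by omega, by simp⟩

/-- Key covering lemma: if `v` and `w` lie in a common `k`-arc and `w` lies in the `k`-arc
starting at `b`, then `v` lies in the `(3k-2)`-arc starting at `b - (k-1)`. -/
lemma cover {n k : ℕ} (hk : 2 ≤ k) {a b v w : ZMod n}
    (hv : v ∈ arc n k a) (hw : w ∈ arc n k a) (hw' : w ∈ arc n k b) :
    v ∈ arc n (3 * k - 2) (b - ((k - 1 : ℕ) : ZMod n)) := by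
  obtain ⟨i, hi, hvi⟩ := mem_arc.1 hv
  obtain ⟨j, hj, hwj⟩ := mem_arc.1 hw
  obtain ⟨l, hl, hwl⟩ := mem_arc.1 hw'
  refine mem_arc.2 ⟨l + i + (k - 1 - j), by omega, ?_⟩
  have e1 : ((l + i + (k - 1 - j) : ℕ) : ZMod n)
      = (l : ℕ) + (i : ℕ) + (((k - 1 : ℕ) : ZMod n) - (j : ℕ)) := by
    rw [Nat.cast_add, Nat.cast_add, Nat.cast_sub (by omega : j ≤ k - 1)]
  rw [hvi, e1]
  have h2 : a + (j : ℕ) = b + (l : ℕ) := hwj.symm.trans hwl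
  linear_combination h2

-- A canonical starting point for each cycle edge.
open Classical in
noncomputable def corner (n k : ℕ) (f : Finset (ZMod n)) : ZMod n :=
  if h : CycleEdge n k f then h.choose else 0

lemma corner_spec {n k : ℕ} {f : Finset (ZMod n)} (h : CycleEdge n k f) :
    f = arc n k (corner n k f) := by
  classical
  rw [corner, dif_pos h]
  exact h.choose_spec

lemma lower_bound {n k : ℕ} (hk : 2 ≤ k) (hn : k ≤ n) {F : Finset (Finset (ZMod n))}
    (hF : EdgewiseDominant (CycleEdge n k) F) : n ≤ F.card * (3 * k - 2) := by
  haveI : NeZero n := ⟨by omega⟩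
  set D : Finset (ZMod n) → Finset (ZMod n) :=
    fun f => arc n (3 * k - 2) (corner n k f - ((k - 1 : ℕ) : ZMod n)) with hD
  have hcov : (Finset.univ : Finset (ZMod n)) ⊆ F.biUnion D := by
    intro v _
    rw [Finset.mem_biUnion]
    by_cases hvf : ∃ f ∈ F, v ∈ f
    · obtain ⟨f, hfF, hvF⟩ := hvf
      refine ⟨f, hfF, ?_⟩
      have hc := corner_spec (hF.1 f hfF)
      rw [hc] at hvF
      exact cover hk hvF hvF hvF
    · push_neg at hvf
      have hni : ¬ IsIsolated (CycleEdge n k) v := by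
        intro h
        exact h (arc n k v) (cycleEdge_arc v) (self_mem_arc (by omega) v)
      have htr : ∀ e, CycleEdge n k e → v ∈ e → e.card ≠ 1 := by
        rintro e ⟨a, rfl⟩ _
        rw [show (Finset.range k).image (fun j : ℕ => a + (j : ZMod n)) = arc n k a from rfl,
          card_arc hn]
        omega
      obtain ⟨w, ⟨e, he, hve, hwe⟩, f, hfF, hwf⟩ := hF.2 v hni hvf htr
      obtain ⟨a, rfl⟩ := he
      have hc := corner_spec (hF.1 f hfF)
      rw [hc] at hwf
      exact ⟨f, hfF, cover hk hve hwe hwf⟩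
  calc n = (Finset.univ : Finset (ZMod n)).card := by
        rw [Finset.card_univ, ZMod.card]
    _ ≤ (F.biUnion D).card := Finset.card_le_card hcov
    _ ≤ ∑ f ∈ F, (D f).card := Finset.card_biUnion_le
    _ ≤ F.card * (3 * k - 2) := by
        refine Finset.sum_le_card_nsmul F _ (3 * k - 2) (fun f _ => ?_)
        exact le_trans Finset.card_image_le (le_of_eq (Finset.card_range _))

lemma upper_bound {n k : ℕ} (hk : 2 ≤ k) (hn : k ≤ n) :
    ∃ F : Finset (Finset (ZMod n)), EdgewiseDominant (CycleEdge n k) F ∧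
      F.card ≤ (n + (3 * k - 2) - 1) / (3 * k - 2) := by
  haveI : NeZero n := ⟨by omega⟩
  set d := 3 * k - 2 with hd
  have hd0 : 0 < d := by omega
  set m := (n + d - 1) / d with hm
  have hmd : n ≤ m * d := by
    have h := Nat.lt_div_mul_add (a := n - 1) hd0
    have hm2 : m = (n - 1) / d + 1 := by
      have h2 : n + d - 1 = (n - 1) + d := by omega
      rw [hm, h2, Nat.add_div_right _ hd0]
    rw [hm2, Nat.add_mul, one_mul]; omega
  refine ⟨(Finset.range m).image
    (fun i => arc n k (((i * d + (k - 1) : ℕ) : ZMod n))), ⟨?_, ?_⟩, ?_⟩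
  · intro f hf
    obtain ⟨i, _, rfl⟩ := Finset.mem_image.1 hf
    exact cycleEdge_arc _
  · intro v _ _ _
    set q := v.val / d with hq
    set r := v.val % d with hr
    have hvltn : v.val < n := ZMod.val_lt v
    have hrd : r < d := Nat.mod_lt _ hd0
    have hqm : q < m := by
      rw [hq, Nat.div_lt_iff_lt_mul hd0]
      omega
    have hvqr : v = ((q * d + r : ℕ) : ZMod n) := by
      rw [show q * d + r = v.val by rw [hq, hr, mul_comm]; exact Nat.div_add_mod _ _]
      exact (ZMod.natCast_rightInverse v).symm
    set c := min (max r (k - 1)) (2 * k - 2) with hc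
    set s := min r c with hs
    have hbounds : s ≤ r ∧ s ≤ c ∧ r - s ≤ k - 1 ∧ c - s ≤ k - 1 ∧
        k - 1 ≤ c ∧ c ≤ 2 * k - 2 := by
      constructor; · omega
      constructor; · omega
      refine ⟨?_, ?_, ?_, ?_⟩ <;> omega
    refine ⟨((q * d + c : ℕ) : ZMod n),
      ⟨arc n k (((q * d + s : ℕ) : ZMod n)), cycleEdge_arc _, ?_, ?_⟩,
      arc n k (((q * d + (k - 1) : ℕ) : ZMod n)),
      Finset.mem_image.2 ⟨q, Finset.mem_range.2 hqm, rfl⟩, ?_⟩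
    · -- v ∈ arc (q*d+s)
      refine mem_arc.2 ⟨r - s, by omega, ?_⟩
      rw [hvqr, ← Nat.cast_add]
      congr 1
      omega
    · -- w ∈ arc (q*d+s)
      refine mem_arc.2 ⟨c - s, by omega, ?_⟩
      rw [← Nat.cast_add]
      congr 1
      omega
    · -- w ∈ arc (q*d+(k-1))
      refine mem_arc.2 ⟨c - (k - 1), by omega, ?_⟩
      rw [← Nat.cast_add]
      congr 1
      omega
  · exact le_trans Finset.card_image_le (le_of_eq (Finset.card_range m))

end CycleHelper

/-- For `2 ≤ k ≤ n`, the edgewise domination number of the clutter `C_k(Γ_n)` of the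
`n`-cycle equals `⌈n/(3k-2)⌉`. -/
theorem epsilonDom_cycle (n k : ℕ) (hk : 2 ≤ k) (hn : k ≤ n) :
    epsilonDom (CycleEdge n k) = (n + (3 * k - 2) - 1) / (3 * k - 2) := by
  obtain ⟨F₀, hF₀, hc₀⟩ := CycleHelper.upper_bound hk hn
  rw [epsilonDom]
  apply le_antisymm
  · exact le_trans (Nat.sInf_le ⟨F₀, hF₀, rfl⟩) hc₀
  · have hne : {m : ℕ | ∃ F : Finset (Finset (ZMod n)),
        EdgewiseDominant (CycleEdge n k) F ∧ F.card = m}.Nonempty := ⟨_, F₀, hF₀, rfl⟩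
    obtain ⟨F, hF, hcard⟩ := Nat.sInf_mem hne
    have hlow := CycleHelper.lower_bound hk hn hF
    rw [hcard] at hlow
    rw [Nat.div_le_iff_le_mul_add_pred (by omega : 0 < 3 * k - 2)]
    have : (3 * k - 2) * sInf {m : ℕ | ∃ F : Finset (Finset (ZMod n)),
        EdgewiseDominant (CycleEdge n k) F ∧ F.card = m}
        = sInf {m : ℕ | ∃ F : Finset (Finset (ZMod n)),
        EdgewiseDominant (CycleEdge n k) F ∧ F.card = m} * (3 * k - 2) := mul_comm _ _
    rw [this]
    omega
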